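/- Let w be an infinite binary word that has infinitely many indices i with w_i = 0 and infinitely many indices i with w_i = 1. Then for every real p > 0, there exists N such that d_n(w) > n^p for all n ≥ N. -/

import Mathlib

open Filter

/-- `dCount w n` is the number of permutations `π` of `{1,…,n}` (modeled as `Fin n`,
zero-based) such that for every `1 ≤ i ≤ n-1`, `π(i) > π(i+1)` iff the `i`-th letter of the
infinite binary word `w` (1-indexed, `w 0` is irrelevant) equals `1` (i.e. `true`). -/
noncomputable def dCount (w : ℕ → Bool) (n : ℕ) : ℕ :=
  Nat.card {π : Equiv.Perm (Fin n) //
    ∀ i : ℕ, ∀ h : i + 1 < n,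
      (π ⟨i + 1, h⟩ < π ⟨i, Nat.lt_of_succ_lt h⟩ ↔ w (i + 1) = true)}


def DP (w : ℕ → Bool) (n : ℕ) (π : Equiv.Perm (Fin n)) : Prop :=
  ∀ i : ℕ, ∀ h : i + 1 < n,
      (π ⟨i + 1, h⟩ < π ⟨i, Nat.lt_of_succ_lt h⟩ ↔ w (i + 1) = true)

noncomputable def dCount' (w : ℕ → Bool) (n : ℕ) : ℕ :=
  Nat.card {π : Equiv.Perm (Fin n) // DP w n π}

lemma exists_perm (w : ℕ → Bool) (n : ℕ) : ∃ π : Equiv.Perm (Fin n), DP w n π := by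
  induction n with
  | zero => exact ⟨1, fun i h => absurd h (by omega)⟩
  | succ n ih =>
    obtain ⟨π, hπ⟩ := ih
    by_cases hw : w n = true
    · refine ⟨finSuccEquivLast.trans ((Equiv.optionCongr π).trans (finSuccEquiv n).symm), ?_⟩
      intro i h
      have hval : ∀ (j : ℕ) (hj : j < n + 1),
          (finSuccEquivLast.trans ((Equiv.optionCongr π).trans (finSuccEquiv n).symm)) ⟨j, hj⟩
          = if hj' : j < n then Fin.succ (π ⟨j, hj'⟩) else 0 := by
        intro j hj
        by_cases hj' : j < n
        · rw [dif_pos hj']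
          have : (⟨j, hj⟩ : Fin (n+1)) = Fin.castSucc ⟨j, hj'⟩ := rfl
          rw [this]
          simp only [Equiv.trans_apply, finSuccEquivLast_castSucc, Equiv.optionCongr_apply,
            Option.map_some, finSuccEquiv_symm_some]
        · have hjn : j = n := by omega
          subst hjn
          rw [dif_neg hj']
          have : (⟨j, hj⟩ : Fin (j+1)) = Fin.last j := rfl
          rw [this]
          simp only [Equiv.trans_apply, finSuccEquivLast_last, Equiv.optionCongr_apply,
            Option.map_none, finSuccEquiv_symm_none]
      rw [hval, hval]
      by_cases h1 : i + 1 < n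
      · rw [dif_pos h1, dif_pos (by omega : i < n), Fin.succ_lt_succ_iff]
        exact hπ i h1
      · have : i + 1 = n := by omega
        subst this
        rw [dif_neg (by omega), dif_pos (by omega : i < i + 1)]
        simp [hw, Fin.succ_pos]
    · refine ⟨finSuccEquivLast.trans ((Equiv.optionCongr π).trans finSuccEquivLast.symm), ?_⟩
      intro i h
      have hval : ∀ (j : ℕ) (hj : j < n + 1),
          (finSuccEquivLast.trans ((Equiv.optionCongr π).trans finSuccEquivLast.symm)) ⟨j, hj⟩
          = if hj' : j < n then Fin.castSucc (π ⟨j, hj'⟩) else Fin.last n := by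
        intro j hj
        by_cases hj' : j < n
        · rw [dif_pos hj']
          have : (⟨j, hj⟩ : Fin (n+1)) = Fin.castSucc ⟨j, hj'⟩ := rfl
          rw [this]
          simp only [Equiv.trans_apply, finSuccEquivLast_castSucc, Equiv.optionCongr_apply,
            Option.map_some]
          exact (Equiv.symm_apply_eq finSuccEquivLast).mpr (finSuccEquivLast_castSucc _).symm
        · have hjn : j = n := by omega
          subst hjn
          rw [dif_neg hj']
          have : (⟨j, hj⟩ : Fin (j+1)) = Fin.last j := rfl
          rw [this]
          simp only [Equiv.trans_apply, finSuccEquivLast_last, Equiv.optionCongr_apply,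
            Option.map_none]
          exact (Equiv.symm_apply_eq finSuccEquivLast).mpr finSuccEquivLast_last.symm
      rw [hval, hval]
      by_cases h1 : i + 1 < n
      · rw [dif_pos h1, dif_pos (by omega : i < n), Fin.castSucc_lt_castSucc_iff]
        exact hπ i h1
      · have : i + 1 = n := by omega
        subst this
        rw [dif_neg (by omega), dif_pos (by omega : i < i + 1)]
        exact iff_of_false (not_lt_of_ge (Fin.le_last _)) hw


lemma dCount'_pos (w : ℕ → Bool) (n : ℕ) : 1 ≤ dCount' w n := by
  obtain ⟨π, hπ⟩ := exists_perm w n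
  haveI : Nonempty {π : Equiv.Perm (Fin n) // DP w n π} := ⟨⟨π, hπ⟩⟩
  exact Nat.card_pos

open Equiv Finset

section Build
variable {n s : ℕ}

def zf (hsn : s + 2 ≤ n) : Fin n := ⟨0, by omega⟩

def Aset (hsn : s + 2 ≤ n) (B : Finset (Fin n)) : Finset (Fin n) := insert (zf hsn) B

lemma Aset_card (hsn : s + 2 ≤ n) (B : Finset (Fin n)) (hB : B.card = n - s - 1)
    (hB0 : zf hsn ∉ B) : (Aset hsn B).card = n - s := by
  rw [Aset, Finset.card_insert_of_notMem hB0, hB]; omega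

lemma Aset_compl_card (hsn : s + 2 ≤ n) (B : Finset (Fin n)) (hB : B.card = n - s - 1)
    (hB0 : zf hsn ∉ B) : (Aset hsn B)ᶜ.card = s := by
  rw [Finset.card_compl, Aset_card hsn B hB hB0, Fintype.card_fin]; omega

def buildPerm (hsn : s + 2 ≤ n) (B : Finset (Fin n)) (hB : B.card = n - s - 1)
    (hB0 : zf hsn ∉ B) (σ : Equiv.Perm (Fin s)) : Equiv.Perm (Fin n) :=
  (finCongr (by omega : n = s + (n - s))).trans <|
    finSumFinEquiv.symm.trans <|
      (Equiv.sumCongr σ (Equiv.refl (Fin (n - s)))).trans <|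
        (Equiv.sumCongr
          (((Aset hsn B)ᶜ.orderIsoOfFin (Aset_compl_card hsn B hB hB0)).toEquiv.trans
            (Equiv.subtypeEquivRight (fun x => Finset.mem_compl)))
          ((Aset hsn B).orderIsoOfFin (Aset_card hsn B hB hB0)).toEquiv).trans <|
          (Equiv.sumComm _ _).trans (Equiv.sumCompl (· ∈ Aset hsn B))

lemma buildPerm_lo (hsn : s + 2 ≤ n) (B : Finset (Fin n)) (hB : B.card = n - s - 1)
    (hB0 : zf hsn ∉ B) (σ : Equiv.Perm (Fin s)) (j : ℕ) (hj : j < n) (hj' : j < s) :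
    buildPerm hsn B hB hB0 σ ⟨j, hj⟩ =
      ↑(((Aset hsn B)ᶜ.orderIsoOfFin (Aset_compl_card hsn B hB hB0)) (σ ⟨j, hj'⟩)) := by
  have h1 : (finCongr (by omega : n = s + (n - s))) ⟨j, hj⟩
      = Fin.castAdd (n - s) ⟨j, hj'⟩ := by
    apply Fin.ext; simp
  simp only [buildPerm, Equiv.trans_apply, h1, finSumFinEquiv_symm_apply_castAdd,
    Equiv.sumCongr_apply, Sum.map_inl, Equiv.sumComm_apply, Sum.swap_inl,
    Equiv.sumCompl_apply_inr, Equiv.subtypeEquivRight_apply]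
  rfl

lemma buildPerm_hi (hsn : s + 2 ≤ n) (B : Finset (Fin n)) (hB : B.card = n - s - 1)
    (hB0 : zf hsn ∉ B) (σ : Equiv.Perm (Fin s)) (j : ℕ) (hj : j < n) (hj' : s ≤ j) :
    buildPerm hsn B hB hB0 σ ⟨j, hj⟩ =
      ↑(((Aset hsn B).orderIsoOfFin (Aset_card hsn B hB hB0)) ⟨j - s, by omega⟩) := by
  have h1 : (finCongr (by omega : n = s + (n - s))) ⟨j, hj⟩
      = Fin.natAdd s ⟨j - s, by omega⟩ := by
    apply Fin.ext; simp; omega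
  simp only [buildPerm, Equiv.trans_apply, h1, finSumFinEquiv_symm_apply_natAdd,
    Equiv.sumCongr_apply, Sum.map_inr, Equiv.refl_apply, Equiv.sumComm_apply, Sum.swap_inr,
    Equiv.sumCompl_apply_inl]
  rfl

end Build


section Build2
variable {n s : ℕ}
lemma zf_mem (hsn : s + 2 ≤ n) (B : Finset (Fin n)) : zf hsn ∈ Aset hsn B :=
  Finset.mem_insert_self _ _

lemma isoA_zero (hsn : s + 2 ≤ n) (B : Finset (Fin n)) (hB : B.card = n - s - 1)
    (hB0 : zf hsn ∉ B) :
    ((Aset hsn B).orderIsoOfFin (Aset_card hsn B hB hB0)) ⟨0, by omega⟩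
      = ⟨zf hsn, zf_mem hsn B⟩ := by
  set iso := (Aset hsn B).orderIsoOfFin (Aset_card hsn B hB hB0)
  obtain ⟨j, hj⟩ := iso.surjective ⟨zf hsn, zf_mem hsn B⟩
  have h0j : (⟨0, by omega⟩ : Fin (n - s)) ≤ j := by
    rw [Fin.le_def]; exact Nat.zero_le _
  have hle : iso ⟨0, by omega⟩ ≤ ⟨zf hsn, zf_mem hsn B⟩ := by
    rw [← hj]; exact iso.monotone h0j
  have hv : ((iso ⟨0, by omega⟩ : {x // x ∈ Aset hsn B}) : Fin n).val ≤ 0 := hle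
  apply Subtype.ext; apply Fin.ext
  simpa [zf] using Nat.le_zero.mp hv

lemma buildPerm_DP (w : ℕ → Bool) (hsn : s + 2 ≤ n) (B : Finset (Fin n))
    (hB : B.card = n - s - 1) (hB0 : zf hsn ∉ B) (σ : Equiv.Perm (Fin s)) (hσ : DP w s σ)
    (hb : w s = true) (htail : ∀ j, s + 1 ≤ j → j < n → w j = false) :
    DP w n (buildPerm hsn B hB hB0 σ) := by
  intro i h
  rcases lt_trichotomy (i + 1) s with hi1 | hi1 | hi1
  · rw [buildPerm_lo hsn B hB hB0 σ (i+1) h hi1,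
      buildPerm_lo hsn B hB hB0 σ i (Nat.lt_of_succ_lt h) (by omega)]
    rw [Subtype.coe_lt_coe, OrderIso.lt_iff_lt]
    exact hσ i hi1
  · rw [buildPerm_lo hsn B hB hB0 σ i (Nat.lt_of_succ_lt h) (by omega),
      buildPerm_hi hsn B hB hB0 σ (i+1) h (by omega)]
    have hidx : (⟨i + 1 - s, by omega⟩ : Fin (n - s)) = ⟨0, by omega⟩ := by
      apply Fin.ext; simp; omega
    rw [hidx, isoA_zero hsn B hB hB0]
    have hw : w (i+1) = true := by rw [← hi1] at hb; exact hb
    rw [hw]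
    simp only [iff_true]
    set x := ((Aset hsn B)ᶜ.orderIsoOfFin (Aset_compl_card hsn B hB hB0)) (σ ⟨i, by omega⟩)
    have hxc : (x : Fin n) ∉ Aset hsn B := Finset.mem_compl.mp x.2
    have hxz : (x : Fin n) ≠ zf hsn := fun hc => hxc (hc ▸ zf_mem hsn B)
    rw [Fin.lt_def]
    have : ((x : Fin n)).val ≠ 0 := by
      intro hc; exact hxz (Fin.ext (by simpa [zf] using hc))
    simp [zf]; omega
  · rw [buildPerm_hi hsn B hB hB0 σ (i+1) h (by omega),
      buildPerm_hi hsn B hB hB0 σ i (Nat.lt_of_succ_lt h) (by omega)]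
    have hw : w (i+1) = false := htail (i+1) (by omega) h
    rw [hw]
    simp only [Bool.false_eq_true, iff_false, not_lt]
    rw [Subtype.coe_le_coe, OrderIso.le_iff_le, Fin.le_def]
    simp; omega


lemma buildPerm_image (hsn : s + 2 ≤ n) (B : Finset (Fin n)) (hB : B.card = n - s - 1)
    (hB0 : zf hsn ∉ B) (σ : Equiv.Perm (Fin s)) :
    Finset.image (fun j : Fin (n - s) => buildPerm hsn B hB hB0 σ ⟨s + j.1, by omega⟩)
      Finset.univ = Aset hsn B := by
  apply Finset.eq_of_subset_of_card_le
  · intro x hx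
    obtain ⟨j, _, rfl⟩ := Finset.mem_image.mp hx
    rw [buildPerm_hi hsn B hB hB0 σ (s + j.1) (by omega) (by omega)]
    exact (((Aset hsn B).orderIsoOfFin (Aset_card hsn B hB hB0)) _).2
  · rw [Finset.card_image_of_injective _ (fun a b hab => by
      have := (buildPerm hsn B hB hB0 σ).injective hab
      apply Fin.ext
      have : s + a.1 = s + b.1 := congrArg Fin.val this
      omega)]
    rw [Aset_card hsn B hB hB0]
    simp

lemma buildPerm_inj (hsn : s + 2 ≤ n) (B B' : Finset (Fin n)) (hB : B.card = n - s - 1)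
    (hB0 : zf hsn ∉ B) (hB' : B'.card = n - s - 1) (hB0' : zf hsn ∉ B')
    (σ σ' : Equiv.Perm (Fin s))
    (heq : buildPerm hsn B hB hB0 σ = buildPerm hsn B' hB' hB0' σ') :
    B = B' ∧ σ = σ' := by
  have hA : Aset hsn B = Aset hsn B' := by
    rw [← buildPerm_image hsn B hB hB0 σ, ← buildPerm_image hsn B' hB' hB0' σ', heq]
  have hBB : B = B' := by
    have h1 : (Aset hsn B).erase (zf hsn) = (Aset hsn B').erase (zf hsn) := by rw [hA]
    rwa [Aset, Aset, Finset.erase_insert hB0, Finset.erase_insert hB0'] at h1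
  subst hBB
  refine ⟨rfl, ?_⟩
  apply Equiv.ext
  intro x
  have h1 := buildPerm_lo hsn B hB hB0 σ x.1 (by omega) x.2
  have h2 := buildPerm_lo hsn B hB hB0' σ' x.1 (by omega) x.2
  rw [heq] at h1
  rw [h1] at h2
  have h3 := Subtype.coe_injective h2
  have h4 := (((Aset hsn B)ᶜ.orderIsoOfFin (Aset_compl_card hsn B hB hB0)).injective
    (h3.symm.trans (by congr 1)))
  simpa [Fin.eta] using h4.symm

lemma card_Bsub (hsn : s + 2 ≤ n) :
    Nat.card {B : Finset (Fin n) // B.card = n - s - 1 ∧ zf hsn ∉ B}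
      = (n - 1).choose (n - s - 1) := by
  have he : {B : Finset (Fin n) // B.card = n - s - 1 ∧ zf hsn ∉ B}
      ≃ {B // B ∈ Finset.powersetCard (n - s - 1) (Finset.univ.erase (zf hsn))} := by
    apply Equiv.subtypeEquivRight
    intro B
    rw [Finset.mem_powersetCard, Finset.subset_erase]
    constructor
    · rintro ⟨h1, h2⟩; exact ⟨⟨Finset.subset_univ _, h2⟩, h1⟩
    · rintro ⟨⟨_, h2⟩, h1⟩; exact ⟨h1, h2⟩
  rw [Nat.card_congr he, Nat.card_eq_finsetCard, Finset.card_powersetCard,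
    Finset.card_erase_of_mem (Finset.mem_univ _)]
  simp

lemma step_core (w : ℕ → Bool) (hsn : s + 2 ≤ n) (hb : w s = true)
    (htail : ∀ j, s + 1 ≤ j → j < n → w j = false) :
    (n - 1).choose (n - s - 1) * dCount' w s ≤ dCount' w n := by
  classical
  let F : {σ : Equiv.Perm (Fin s) // DP w s σ}
      × {B : Finset (Fin n) // B.card = n - s - 1 ∧ zf hsn ∉ B}
      → {π : Equiv.Perm (Fin n) // DP w n π} :=
    fun x => ⟨buildPerm hsn x.2.1 x.2.2.1 x.2.2.2 x.1.1,
      buildPerm_DP w hsn x.2.1 x.2.2.1 x.2.2.2 x.1.1 x.1.2 hb htail⟩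
  have hF : Function.Injective F := by
    rintro ⟨⟨σ, hσ⟩, ⟨B, hB, hB0⟩⟩ ⟨⟨σ', hσ'⟩, ⟨B', hB', hB0'⟩⟩ h
    have h' := Subtype.ext_iff.mp h
    obtain ⟨hBB, hσσ⟩ := buildPerm_inj hsn B B' hB hB0 hB' hB0' σ σ' h'
    subst hBB; subst hσσ; rfl
  have hcard := Nat.card_le_card_of_injective F hF
  rw [Nat.card_prod, card_Bsub hsn, mul_comm] at hcard
  exact hcard

lemma DP_not (w : ℕ → Bool) (n : ℕ) (π : Equiv.Perm (Fin n)) (hπ : DP w n π) :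
    DP (fun i => !(w i)) n (π.trans Fin.revPerm) := by
  intro i h
  simp only [Equiv.trans_apply, Fin.revPerm_apply]
  rw [Fin.rev_lt_rev]
  have hne : π ⟨i, Nat.lt_of_succ_lt h⟩ ≠ π ⟨i + 1, h⟩ := by
    intro hc
    have := π.injective hc
    have := congrArg Fin.val this
    simp at this
  have horig := hπ i h
  cases hw : w (i + 1) with
  | true =>
    rw [hw] at horig
    simp only [Bool.not_true, Bool.false_eq_true, iff_false, not_lt]
    exact le_of_lt (horig.mpr rfl)
  | false =>
    rw [hw] at horig
    simp only [Bool.not_false, iff_true]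
    rcases lt_or_eq_of_le (not_lt.mp (fun hc => absurd (horig.mp hc) (by simp))) with h' | h'
    · exact h'
    · exact absurd h' hne

lemma dCount'_le_not (w : ℕ → Bool) (n : ℕ) :
    dCount' w n ≤ dCount' (fun i => !(w i)) n := by
  classical
  apply Nat.card_le_card_of_injective
    (fun x : {π : Equiv.Perm (Fin n) // DP w n π} =>
      (⟨x.1.trans Fin.revPerm, DP_not w n x.1 x.2⟩ :
        {π : Equiv.Perm (Fin n) // DP (fun i => !(w i)) n π}))
  rintro ⟨a, ha⟩ ⟨b, hb⟩ h
  have h' := Subtype.ext_iff.mp h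
  apply Subtype.ext
  apply Equiv.ext
  intro x
  have := congrArg (fun e : Equiv.Perm (Fin n) => Fin.rev (e x)) h'
  simpa [Fin.rev_rev] using this

lemma dCount'_not (w : ℕ → Bool) (n : ℕ) :
    dCount' (fun i => !(w i)) n = dCount' w n := by
  apply le_antisymm
  · have := dCount'_le_not (fun i => !(w i)) n
    have hww : (fun i => !(!(w i))) = w := funext fun i => Bool.not_not (w i)
    rwa [hww] at this
  · exact dCount'_le_not w n

lemma step (w : ℕ → Bool) (hsn : s + 2 ≤ n) (hswitch : w s ≠ w (s + 1))
    (htail : ∀ j, s + 1 ≤ j → j < n → w j = w (s + 1)) :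
    (n - 1).choose (n - s - 1) * dCount' w s ≤ dCount' w n := by
  cases hc : w (s + 1) with
  | false =>
    apply step_core w hsn
    · cases hb : w s
      · rw [hb, hc] at hswitch; exact absurd rfl hswitch
      · rfl
    · intro j h1 h2; rw [htail j h1 h2, hc]
  | true =>
    have hb : w s = false := by
      cases hb : w s
      · rfl
      · rw [hb, hc] at hswitch; exact absurd rfl hswitch
    have h1 := step_core (fun i => !(w i)) hsn
      (by simp only [hb, Bool.not_false])
      (fun j hj1 hj2 => by simp only [htail j hj1 hj2, hc, Bool.not_true])
    rwa [dCount'_not, dCount'_not] at h1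

end Build2

lemma choose_chain (N : ℕ) : ∀ a b : ℕ, a ≤ b → 2 * b ≤ N → N.choose a ≤ N.choose b := by
  intro a b hab
  induction hab with
  | refl => intro _; exact le_rfl
  | @step b hb ih =>
    intro h2b
    refine le_trans (ih (by omega)) (Nat.choose_le_succ_of_lt_half_left ?_)
    omega

lemma choose_ge (N a b : ℕ) (hab : a ≤ b) (hbn : b ≤ N - a) (haN : a ≤ N) :
    N.choose a ≤ N.choose b := by
  by_cases h2b : 2 * b ≤ N
  · exact choose_chain N a b hab h2b
  · have hbN : b ≤ N := by omega
    rw [← Nat.choose_symm hbN]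
    exact choose_chain N a (N - b) (by omega) (by omega)

lemma choose_pow_lb (m r : ℕ) (hrm : r + 1 ≤ m) :
    ((m : ℝ) - r) ^ r ≤ (r : ℝ) ^ r * ((m - 1).choose r : ℝ) := by
  have h1 : (m - r) ^ r ≤ (m - 1).descFactorial r := by
    have := Nat.pow_sub_le_descFactorial (m - 1) r
    have he : m - 1 + 1 - r = m - r := by omega
    rwa [he] at this
  have h2 : (m - 1).descFactorial r = r.factorial * (m - 1).choose r :=
    Nat.descFactorial_eq_factorial_mul_choose _ _
  have h3 : (m - r) ^ r ≤ r ^ r * (m - 1).choose r := by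
    calc (m - r) ^ r ≤ r.factorial * (m - 1).choose r := by rw [← h2]; exact h1
    _ ≤ r ^ r * (m - 1).choose r :=
      Nat.mul_le_mul_right _ (Nat.factorial_le_pow r)
  have h4 := (Nat.cast_le (α := ℝ)).mpr h3
  push_cast [Nat.cast_sub (by omega : r ≤ m)] at h4
  exact h4

section Sw
variable (w : ℕ → Bool)

lemma switch_between : ∀ d a : ℕ, w a ≠ w (a + d) → ∃ t, a ≤ t ∧ t < a + d ∧ w t ≠ w (t + 1) := by
  intro d
  induction d with
  | zero => intro a h; simp at h
  | succ d ih =>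
    intro a h
    by_cases h1 : w a = w (a + 1)
    · obtain ⟨t, ht1, ht2, ht3⟩ := ih (a + 1)
        (by have harg : a + 1 + d = a + (d + 1) := by omega
            rw [← h1, harg]; exact h)
      exact ⟨t, by omega, by omega, ht3⟩
    · exact ⟨a, le_rfl, by omega, h1⟩

lemma exists_switch (h0 : ∀ N : ℕ, ∃ i : ℕ, N ≤ i ∧ 1 ≤ i ∧ w i = false)
    (h1 : ∀ N : ℕ, ∃ i : ℕ, N ≤ i ∧ 1 ≤ i ∧ w i = true) (M : ℕ) :
    ∃ K, M ≤ K ∧ 1 ≤ K ∧ w K ≠ w (K + 1) := by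
  obtain ⟨i, hi1, hi2, hi3⟩ := h0 (M + 1)
  obtain ⟨j, hj1, hj2, hj3⟩ := h1 (M + 1)
  rcases le_total i j with hij | hij
  · obtain ⟨t, ht1, ht2, ht3⟩ := switch_between w (j - i) i
      (by rw [hi3, show i + (j - i) = j by omega, hj3]; simp)
    exact ⟨t, by omega, by omega, ht3⟩
  · obtain ⟨t, ht1, ht2, ht3⟩ := switch_between w (i - j) j
      (by rw [hj3, show j + (i - j) = i by omega, hi3]; simp)
    exact ⟨t, by omega, by omega, ht3⟩
end Sw


lemma outer (w : ℕ → Bool) (r K : ℕ) (hr : 1 ≤ r) (hrK : r ≤ K)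
    (hKsw : w K ≠ w (K + 1)) :
    ∀ ρ : ℕ, ρ ≤ r → ∀ m : ℕ, K + 2 + (r + 1) * ρ ≤ m →
      (((m : ℝ) - 1 - (r + 1) * ρ) / r) ^ ρ ≤ (dCount' w m : ℝ) := by
  intro ρ
  induction ρ with
  | zero =>
    intro _ m _
    simpa using (Nat.one_le_cast (α := ℝ)).mpr (dCount'_pos w m)
  | succ ρ ih =>
    intro hρr m hm
    classical
    set S := (Finset.range (m - 1)).filter (fun t => 1 ≤ t ∧ w t ≠ w (t + 1)) with hS
    have hKS : K ∈ S := by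
      rw [hS, Finset.mem_filter, Finset.mem_range]
      exact ⟨by omega, by omega, hKsw⟩
    have hne : S.Nonempty := ⟨K, hKS⟩
    set s := S.max' hne with hs
    have hsS : s ∈ S := S.max'_mem hne
    rw [hS, Finset.mem_filter, Finset.mem_range] at hsS
    obtain ⟨hsm, hs1, hssw⟩ := hsS
    have hKs : K ≤ s := S.le_max' K hKS
    have htail : ∀ j, s + 1 ≤ j → j < m → w j = w (s + 1) := by
      intro j hj1 hj2
      induction j with
      | zero => omega
      | succ j ihj =>
        rcases Nat.lt_or_ge j (s + 1) with hj | hj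
        · have : j = s := by omega
          subst this; rfl
        · by_cases hww : w j = w (j + 1)
          · rw [← hww]; exact ihj hj (by omega)
          · exfalso
            have hjS : j ∈ S := by
              rw [hS, Finset.mem_filter, Finset.mem_range]
              exact ⟨by omega, by omega, hww⟩
            have := S.le_max' j hjS
            omega
    have hexp : (r + 1) * (ρ + 1) = (r + 1) * ρ + (r + 1) := by ring
    rw [hexp] at hm
    have hstep := step w (show s + 2 ≤ m by omega) hssw htail
    set e := m - s - 1 with he
    have he1 : 1 ≤ e := by omega
    have hme : s + e + 1 = m := by omega
    have hrpos : (0:ℝ) < r := by positivity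
    -- real casts
    have hc1 : (s:ℝ) + e + 1 = m := by
      have := congrArg (Nat.cast (R := ℝ)) hme; push_cast at this; exact this
    have hcK : (r:ℝ) ≤ s := by
      have : r ≤ s := by omega
      exact_mod_cast this
    have hcm : (K:ℝ) + 2 + ((r+1) * ρ + (r+1)) ≤ m := by
      have := (Nat.cast_le (α := ℝ)).mpr hm; push_cast at this; linarith
    have hcKr : (r:ℝ) ≤ K := by exact_mod_cast hrK
    have hr1 : (1:ℝ) ≤ r := by exact_mod_cast hr
    have hexpR : ((r:ℝ)+1)*((ρ:ℝ)+1) = ((r:ℝ)+1)*(ρ:ℝ) + ((r:ℝ)+1) := by ring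
    have hnn : (0:ℝ) ≤ ((r:ℝ)+1)*(ρ:ℝ) := by positivity
    set base : ℝ := ((m : ℝ) - 1 - (r + 1) * (ρ + 1)) / r with hbase
    have hbase1 : (1:ℝ) ≤ base := by
      rw [hbase, le_div_iff₀ hrpos]
      linarith [hexpR, hnn]
    have hcast : ((((m-1).choose e : ℕ) : ℝ)) * (dCount' w s : ℝ) ≤ (dCount' w m : ℝ) := by
      have := (Nat.cast_le (α := ℝ)).mpr hstep
      push_cast at this
      exact this
    have hgoal : base ^ (ρ + 1) ≤ (dCount' w m : ℝ) := by
      by_cases hcase : e < r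
      · -- small e
        have hce : (e:ℝ) ≤ (r:ℝ) - 1 := by
          have : (e:ℝ) + 1 ≤ r := by exact_mod_cast hcase
          linarith
        have hsm' : K + 2 + (r + 1) * ρ ≤ s := by omega
        have hIH := ih (by omega) s hsm'
        have hch : (m - 1 : ℕ) ≤ (m-1).choose e := by
          have := choose_ge (m-1) 1 e he1 (by omega) (by omega)
          rwa [Nat.choose_one_right] at this
        have hch' : ((m:ℝ) - 1) ≤ ((m-1).choose e : ℝ) := by
          have := (Nat.cast_le (α := ℝ)).mpr hch
          push_cast [Nat.cast_sub (by omega : 1 ≤ m)] at this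
          exact this
        set base2 : ℝ := ((s:ℝ) - 1 - (r + 1) * ρ) / r with hbase2
        have hb12 : base ≤ base2 := by
          rw [hbase, hbase2, div_le_div_iff_of_pos_right hrpos]
          linarith [hexpR, hnn, hce, hc1]
        have hb2pos : (0:ℝ) ≤ base2 := le_trans (le_trans zero_le_one hbase1) hb12
        have hbm : base ≤ (m:ℝ) - 1 := by
          rw [hbase]
          refine le_trans (div_le_self (by linarith [hexpR, hnn, hcm, hcKr]) hr1) ?_
          linarith [hexpR, hnn]
        calc base ^ (ρ + 1) = base ^ ρ * base := by ring
          _ ≤ base2 ^ ρ * ((m:ℝ) - 1) := by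
              apply mul_le_mul (pow_le_pow_left₀ (le_trans zero_le_one hbase1) hb12 ρ)
                hbm (le_trans zero_le_one hbase1) (by positivity)
          _ ≤ (dCount' w s : ℝ) * ((m-1).choose e : ℝ) := by
              apply mul_le_mul hIH hch' (by linarith) (by positivity)
          _ = ((m-1).choose e : ℝ) * (dCount' w s : ℝ) := by ring
          _ ≤ (dCount' w m : ℝ) := hcast
      · -- big e
        push_neg at hcase
        have hch : (m-1).choose r ≤ (m-1).choose e :=
          choose_ge (m-1) r e hcase (by omega) (by omega)
        have hlow : ((m:ℝ) - r) ^ r ≤ (r:ℝ) ^ r * ((m - 1).choose r : ℝ) :=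
          choose_pow_lb m r (by omega)
        have hdiv : (((m:ℝ) - r) / r) ^ r ≤ ((m - 1).choose r : ℝ) := by
          rw [div_pow, div_le_iff₀ (by positivity)]
          linarith [hlow]
        have hb3 : base ≤ ((m:ℝ) - r) / r := by
          rw [hbase, div_le_div_iff_of_pos_right hrpos]
          linarith [hexpR, hnn]
        have h1r : (1:ℝ) ≤ ((m:ℝ) - r) / r := le_trans hbase1 hb3
        have hchain : base ^ (ρ + 1) ≤ ((m - 1).choose e : ℝ) := by
          calc base ^ (ρ + 1) ≤ (((m:ℝ) - r) / r) ^ (ρ + 1) :=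
                pow_le_pow_left₀ (le_trans zero_le_one hbase1) hb3 _
            _ ≤ (((m:ℝ) - r) / r) ^ r := pow_le_pow_right₀ h1r (by omega)
            _ ≤ ((m - 1).choose r : ℝ) := hdiv
            _ ≤ ((m - 1).choose e : ℝ) := by exact_mod_cast hch
        calc base ^ (ρ + 1) ≤ ((m - 1).choose e : ℝ) := hchain
          _ ≤ ((m - 1).choose e : ℝ) * (dCount' w s : ℝ) := by
              have h1 : (1:ℝ) ≤ (dCount' w s : ℝ) := by exact_mod_cast dCount'_pos w s
              nlinarith [hchain, le_trans (le_trans zero_le_one hbase1) hb3]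
          _ ≤ (dCount' w m : ℝ) := hcast
    push_cast
    exact hgoal


theorem stmt10 (w : ℕ → Bool)
    (h0 : ∀ N : ℕ, ∃ i : ℕ, N ≤ i ∧ 1 ≤ i ∧ w i = false)
    (h1 : ∀ N : ℕ, ∃ i : ℕ, N ≤ i ∧ 1 ≤ i ∧ w i = true)
    (p : ℝ) (hp : 0 < p) :
    ∃ N : ℕ, ∀ n : ℕ, N ≤ n → (n : ℝ) ^ p < (dCount w n : ℝ) := by
  have hdc : ∀ m : ℕ, dCount w m = dCount' w m := fun m => rfl
  obtain ⟨r, hrdef⟩ : ∃ r : ℕ, r = ⌈p⌉₊ + 1 := ⟨_, rfl⟩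
  have hr : 1 ≤ r := by omega
  obtain ⟨K, hK1, hK2, hK3⟩ := exists_switch w h0 h1 r
  obtain ⟨C1, hC1⟩ : ∃ c : ℕ, c = (r + 1) * r := ⟨_, rfl⟩
  obtain ⟨C2, hC2⟩ : ∃ c : ℕ, c = (2 * r) ^ r := ⟨_, rfl⟩
  refine ⟨K + 2 + C1 + 2 * (1 + C1) + C2 + 1, fun n hn => ?_⟩
  rw [hdc n]
  have houter := outer w r K hr hK1 hK3 r le_rfl n (by omega)
  have hnn : (0:ℕ) < n := by omega
  have hn1 : (1:ℝ) ≤ (n:ℝ) := by exact_mod_cast hnn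
  have hrpos : (0:ℝ) < (r:ℝ) := by positivity
  have h2c : 2 * (1 + ((r:ℝ) + 1) * r) ≤ (n:ℝ) := by
    have hnat : 2 * (1 + C1) ≤ n := by omega
    have := (Nat.cast_le (α := ℝ)).mpr hnat
    push_cast [hC1] at this
    linarith
  have hC2n : ((2 * r : ℕ) : ℝ) ^ r < (n:ℝ) := by
    have hnat : C2 < n := by omega
    have := (Nat.cast_lt (α := ℝ)).mpr hnat
    rw [hC2] at this
    push_cast at this
    push_cast
    linarith
  set base : ℝ := ((n : ℝ) - 1 - ((r:ℝ) + 1) * r) / r with hbase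
  have hb_lb : (n:ℝ) / (2 * r) ≤ base := by
    rw [hbase, div_le_div_iff₀ (by positivity) hrpos]
    ring_nf
    nlinarith [h2c, hrpos, hn1]
  have hq_nonneg : (0:ℝ) ≤ (n:ℝ) / (2 * r) := by positivity
  have hrp : (n:ℝ) ^ p ≤ (n:ℝ) ^ ((r - 1 : ℕ) : ℝ) := by
    apply Real.rpow_le_rpow_of_exponent_le hn1
    have : ((r - 1 : ℕ) : ℝ) = (⌈p⌉₊ : ℝ) := by
      rw [hrdef]; push_cast [Nat.add_sub_cancel]; ring
    rw [this]
    exact Nat.le_ceil p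
  rw [Real.rpow_natCast] at hrp
  have hpow_lt : (n:ℝ) ^ (r - 1) < ((n:ℝ) / (2 * r)) ^ r := by
    rw [div_pow, lt_div_iff₀ (by positivity)]
    have hmul : (n:ℝ) ^ (r - 1) * (n:ℝ) = (n:ℝ) ^ r := by
      rw [← pow_succ]
      congr 1
      omega
    calc (n:ℝ) ^ (r - 1) * ((2 * (r:ℝ)) ^ r)
        < (n:ℝ) ^ (r - 1) * (n:ℝ) := by
          apply mul_lt_mul_of_pos_left ?_ (by positivity)
          push_cast at hC2n ⊢
          linarith
      _ = (n:ℝ) ^ r := hmul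
  have hfinal : ((n:ℝ) / (2 * r)) ^ r ≤ base ^ r := pow_le_pow_left₀ hq_nonneg hb_lb r
  have hbb : base ^ r ≤ (dCount' w n : ℝ) := by
    have : (((n : ℝ) - 1 - ((r:ℝ) + 1) * (r:ℝ)) / r) ^ r ≤ (dCount' w n : ℝ) := by
      push_cast at houter ⊢
      exact houter
    rw [hbase]
    exact this
  calc (n:ℝ) ^ p ≤ (n:ℝ) ^ (r - 1) := hrp
    _ < ((n:ℝ) / (2 * r)) ^ r := hpow_lt
    _ ≤ base ^ r := hfinal
    _ ≤ (dCount' w n : ℝ) := hbb
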